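/- Let 𝒜 be the unital C*-algebra of sequences A = (A_k)_{k≥1} of 2×2 complex matrices converging in norm to a scalar multiple of the identity, and let L(A) = inf_{λ∈ℂ} sup_k k‖A_k − λI‖ ∈ [0,∞]. Let A ∈ 𝒜 be the sequence A_k = [[0, 1/k],[0, 0]]. Then L(A) = 1, while sup_k k³·|(A_k* A_k)₁₁ − (A_k* A_k)₂₂| = ∞ (the diagonal-difference seminorms ℓ_k(B) = k³|b₁₁ − b₂₂| are unbounded along A*A). In particular, L(A) is finite but the Lip-seminorm L_∞(B) = max{L(B), sup_k k³|(B_k)₁₁ − (B_k)₂₂|} satisfies L_∞(A*A) = ∞. -/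

import Mathlib

open scoped ENNReal NNReal Matrix Matrix.Norms.L2Operator
open Filter

/-- Membership in the C*-algebra `𝒜` of sequences of `2×2` complex matrices (indexed by
`k ≥ 1`, here realised as `k+1` for `k : ℕ`) converging in (operator) norm to a scalar
multiple of the identity. -/
def ConvToScalar (A : ℕ → Matrix (Fin 2) (Fin 2) ℂ) : Prop :=
  ∃ α : ℂ, Tendsto A atTop (nhds (α • (1 : Matrix (Fin 2) (Fin 2) ℂ)))

/-- The weighted norm `|||A||| = sup_k k ‖A_k‖ ∈ [0,∞]` (the index `k : ℕ` stands for the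
`(k+1)`-st term of the sequence). -/
noncomputable def tripleNorm (A : ℕ → Matrix (Fin 2) (Fin 2) ℂ) : ℝ≥0∞ :=
  ⨆ k : ℕ, ((k : ℝ≥0∞) + 1) * (‖A k‖₊ : ℝ≥0∞)

/-- The Lip-seminorm `L(A) = inf_{λ ∈ ℂ} |||A − λ·1|||`. -/
noncomputable def Lsem (A : ℕ → Matrix (Fin 2) (Fin 2) ℂ) : ℝ≥0∞ :=
  ⨅ l : ℂ, tripleNorm (fun k => A k - l • (1 : Matrix (Fin 2) (Fin 2) ℂ))

lemma coord_le_norm (y : EuclideanSpace ℂ (Fin 2)) (i : Fin 2) : ‖y i‖ ≤ ‖y‖ := by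
  have h := norm_inner_le_norm (𝕜 := ℂ) (EuclideanSpace.single i (1:ℂ)) y
  rw [EuclideanSpace.inner_single_left, EuclideanSpace.norm_single] at h
  simpa using h

lemma entry_le_norm (B : Matrix (Fin 2) (Fin 2) ℂ) (i j : Fin 2) : ‖B i j‖ ≤ ‖B‖ := by
  have h := B.l2_opNorm_mulVec (EuclideanSpace.single j (1:ℂ))
  rw [EuclideanSpace.norm_single] at h
  have h2 := coord_le_norm ((EuclideanSpace.equiv (Fin 2) ℂ).symm
    (B *ᵥ (EuclideanSpace.single j (1:ℂ)))) i
  have h3 : ((EuclideanSpace.equiv (Fin 2) ℂ).symm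
      (B *ᵥ (EuclideanSpace.single j (1:ℂ)))) i = B i j := by
    simp [Matrix.mulVec, dotProduct, EuclideanSpace.single_apply]
  rw [h3] at h2
  simpa using h2.trans h

lemma norm_le_c (c : ℂ) : ‖(!![0, c; 0, 0] : Matrix (Fin 2) (Fin 2) ℂ)‖ ≤ ‖c‖ := by
  rw [Matrix.l2_opNorm_def]
  refine ContinuousLinearMap.opNorm_le_bound _ (norm_nonneg c) fun x => ?_
  rw [LinearEquiv.trans_apply, LinearMap.coe_toContinuousLinearMap', Matrix.toEuclideanLin_apply]
  have hy : ∀ i, (WithLp.toLp 2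
      ((!![0, c; 0, 0] : Matrix (Fin 2) (Fin 2) ℂ) *ᵥ x.ofLp)).ofLp i
      = ![c * x 1, 0] i := by
    intro i
    fin_cases i <;> simp [Matrix.mulVec, dotProduct, Fin.sum_univ_two]
  rw [EuclideanSpace.norm_eq]
  rw [Fin.sum_univ_two, hy 0, hy 1]
  simp only [Matrix.cons_val_zero, Matrix.cons_val_one, Matrix.head_cons, norm_zero]
  rw [show (0:ℝ)^2 = 0 by ring, add_zero, Real.sqrt_sq (norm_nonneg _), norm_mul]
  exact mul_le_mul_of_nonneg_left (coord_le_norm x 1) (norm_nonneg c)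

lemma norm_eq_c (c : ℂ) : ‖(!![0, c; 0, 0] : Matrix (Fin 2) (Fin 2) ℂ)‖ = ‖c‖ := by
  refine le_antisymm (norm_le_c c) ?_
  have := entry_le_norm (!![0, c; 0, 0]) 0 1
  simpa using this

lemma nnnorm_k (k : ℕ) : ‖((k:ℂ)+1)‖₊ = (k:ℝ≥0)+1 := by
  rw [show ((k:ℂ)+1) = ((k+1:ℕ):ℂ) by push_cast; ring,
    show ((k:ℝ≥0)+1) = ((k+1:ℕ):ℝ≥0) by push_cast; ring]
  exact Complex.nnnorm_natCast _

lemma nnnorm_inv_k (k : ℕ) :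
    (‖(1/((k : ℂ) + 1))‖₊ : ℝ≥0∞) = ((k : ℝ≥0∞) + 1)⁻¹ := by
  rw [one_div, nnnorm_inv, nnnorm_k, ENNReal.coe_inv (by positivity)]
  congr 1

lemma kp1_ne_top (k : ℕ) : ((k : ℝ≥0∞) + 1) ≠ ⊤ := by
  rw [show ((k : ℝ≥0∞) + 1) = ((k + 1 : ℕ) : ℝ≥0∞) by push_cast; ring]
  exact ENNReal.natCast_ne_top _

lemma term_eq_one (k : ℕ) :
    ((k : ℝ≥0∞) + 1) * (‖(!![0, 1/((k : ℂ) + 1); 0, 0] : Matrix (Fin 2) (Fin 2) ℂ)‖₊ : ℝ≥0∞)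
      = 1 := by
  have h : (‖(!![0, 1/((k : ℂ) + 1); 0, 0] : Matrix (Fin 2) (Fin 2) ℂ)‖₊ : ℝ≥0∞)
      = ((k : ℝ≥0∞) + 1)⁻¹ := by
    rw [← nnnorm_inv_k k]
    norm_cast
    exact NNReal.coe_injective (by simpa using norm_eq_c (1/((k : ℂ) + 1)))
  rw [h]
  exact ENNReal.mul_inv_cancel (by simp) (kp1_ne_top k)

/-- For the sequence `A_k = [[0, 1/k],[0,0]]` (here the `k`-th term,
`k ≥ 1`, is realised at index `k-1 : ℕ`) one has `L(A) = 1`, while the diagonal-difference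
seminorms `ℓ_k(B) = k³|b₁₁ − b₂₂|` are unbounded along `A*A`:
`sup_k k³ |(A_k*A_k)₁₁ − (A_k*A_k)₂₂| = ∞`.  In particular `L(A)` is finite but
`L_∞(A*A) = max{L(A*A), sup_k k³|(A*A)_{k,11} − (A*A)_{k,22}|} = ∞`. -/
theorem stmt15 :
    let A : ℕ → Matrix (Fin 2) (Fin 2) ℂ := fun k => !![0, 1/((k : ℂ) + 1); 0, 0]
    Lsem A = 1 ∧
      (⨆ k : ℕ, ((k : ℝ≥0∞) + 1) ^ 3 *
        (‖((A k)ᴴ * A k) 0 0 - ((A k)ᴴ * A k) 1 1‖₊ : ℝ≥0∞)) = ⊤ ∧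
      max (Lsem (fun k => (A k)ᴴ * A k))
        (⨆ k : ℕ, ((k : ℝ≥0∞) + 1) ^ 3 *
          (‖((A k)ᴴ * A k) 0 0 - ((A k)ᴴ * A k) 1 1‖₊ : ℝ≥0∞)) = ⊤ := by
  intro A
  have hentry : ∀ k : ℕ, ((A k)ᴴ * A k) 0 0 - ((A k)ᴴ * A k) 1 1
      = -((starRingEnd ℂ) (1/((k : ℂ) + 1)) * (1/((k : ℂ) + 1))) := by
    intro k
    show ((A k)ᴴ * A k) 0 0 - ((A k)ᴴ * A k) 1 1 = _
    simp [A, Matrix.mul_apply, Matrix.conjTranspose_apply, Fin.sum_univ_two]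
  have hsup : (⨆ k : ℕ, ((k : ℝ≥0∞) + 1) ^ 3 *
      (‖((A k)ᴴ * A k) 0 0 - ((A k)ᴴ * A k) 1 1‖₊ : ℝ≥0∞)) = ⊤ := by
    have hterm : ∀ k : ℕ, ((k : ℝ≥0∞) + 1) ^ 3 *
        (‖((A k)ᴴ * A k) 0 0 - ((A k)ᴴ * A k) 1 1‖₊ : ℝ≥0∞) = (k : ℝ≥0∞) + 1 := by
      intro k
      rw [hentry k]
      have hn : (‖-((starRingEnd ℂ) (1/((k : ℂ) + 1)) * (1/((k : ℂ) + 1)))‖₊ : ℝ≥0∞)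
          = ((k : ℝ≥0∞) + 1)⁻¹ * ((k : ℝ≥0∞) + 1)⁻¹ := by
        rw [nnnorm_neg, nnnorm_mul, ENNReal.coe_mul, RCLike.nnnorm_conj, nnnorm_inv_k k]
      rw [hn]
      have ha0 : ((k : ℝ≥0∞) + 1) ≠ 0 := by simp
      have hat := kp1_ne_top k
      calc ((k : ℝ≥0∞) + 1) ^ 3 * (((k : ℝ≥0∞) + 1)⁻¹ * ((k : ℝ≥0∞) + 1)⁻¹)
          = ((k : ℝ≥0∞) + 1) * (((k : ℝ≥0∞) + 1) * ((k : ℝ≥0∞) + 1)⁻¹)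
            * (((k : ℝ≥0∞) + 1) * ((k : ℝ≥0∞) + 1)⁻¹) := by ring
        _ = (k : ℝ≥0∞) + 1 := by
            rw [ENNReal.mul_inv_cancel ha0 hat, mul_one, mul_one]
    simp only [hterm]
    rw [eq_top_iff, ← ENNReal.iSup_natCast]
    exact iSup_mono fun n => le_self_add
  refine ⟨?_, hsup, by rw [hsup]; exact max_eq_right le_top⟩
  refine le_antisymm ?_ ?_
  · refine (iInf_le _ (0:ℂ)).trans ?_
    have h0 : tripleNorm (fun k => A k - (0:ℂ) • (1 : Matrix (Fin 2) (Fin 2) ℂ))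
        = tripleNorm A := by simp [tripleNorm]
    rw [h0, tripleNorm]
    exact iSup_le fun k => le_of_eq (term_eq_one k)
  · refine le_iInf fun l => ?_
    rw [tripleNorm]
    refine le_trans ?_ (le_iSup _ 0)
    have he : (A 0 - l • (1 : Matrix (Fin 2) (Fin 2) ℂ)) 0 1 = 1 := by
      simp [A, Matrix.one_apply, Matrix.smul_apply]
    have h := entry_le_norm (A 0 - l • (1 : Matrix (Fin 2) (Fin 2) ℂ)) 0 1
    rw [he] at h
    have h1 : (1:ℝ) ≤ ‖A 0 - l • (1 : Matrix (Fin 2) (Fin 2) ℂ)‖ := by simpa using h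
    simp only [Nat.cast_zero, zero_add, one_mul]
    exact_mod_cast h1
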